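/- Let A > 0, m ≥ 1, ε > 0, L > 0, and κ ≤ m a positive integer. Suppose g : ℝ → [0,1] satisfies, for all t ∈ (-Aσ, Aσ), the bound ∏_{l=1}^{κ}(1 - L·e^{-σA/((1+ε)m) + |t|/((1+ε)m)}) ≤ g(t) ≤ 1 (whenever the lower bound is nonnegative). Then |∫_{-Aσ}^{Aσ} h'(t)(1 - g(t)) dt| ≤ ∑_{l=1}^{κ} binom(κ,l)·L^l·e^{-lσA/((1+ε)m)}·∫_{-∞}^{∞} e^{l|t|/((1+ε)m)} h'(t) dt, where h is the logistic function; in particular this bound is O(e^{-σA/((1+ε)m)}) as σ → ∞. -/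

import Mathlib

open MeasureTheory Set

noncomputable def logistic (t : ℝ) : ℝ := 1 / (1 + Real.exp (-t))


lemma logistic_mem (t : ℝ) : 0 ≤ logistic t ∧ logistic t ≤ 1 := by
  unfold logistic
  have he := Real.exp_pos (-t)
  constructor
  · positivity
  · rw [div_le_one (by positivity)]
    nlinarith

lemma hderiv_nonneg (t : ℝ) : 0 ≤ logistic t * (1 - logistic t) := by
  obtain ⟨h0, h1⟩ := logistic_mem t
  nlinarith

lemma hderiv_le (t : ℝ) : logistic t * (1 - logistic t) ≤ Real.exp (-|t|) := by
  have he := Real.exp_pos (-t)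
  have heq : logistic t * (1 - logistic t) = Real.exp (-t) / (1 + Real.exp (-t))^2 := by
    unfold logistic; field_simp; ring
  rw [heq]
  rcases abs_cases t with ⟨h, _⟩ | ⟨h, _⟩
  · rw [h, div_le_iff₀ (by positivity)]
    nlinarith [mul_pos he he, mul_pos (mul_pos he he) he]
  · rw [h, neg_neg]
    have : Real.exp t = (Real.exp (-t))⁻¹ := by
      rw [← Real.exp_neg, neg_neg]
    rw [this, inv_eq_one_div, div_le_div_iff₀ (by positivity) he]
    nlinarith

lemma integrable_exp_neg_abs {b : ℝ} (hb : 0 < b) :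
    Integrable (fun t : ℝ => Real.exp (-b * |t|)) := by
  have hf : IntegrableOn (fun t : ℝ => Real.exp (-b * |t|)) (Ioi 0) := by
    refine (exp_neg_integrableOn_Ioi 0 hb).congr_fun (fun x hx => ?_) measurableSet_Ioi
    rw [abs_of_pos hx]
  have int_Iic : IntegrableOn (fun t : ℝ => Real.exp (-b * |t|)) (Iic 0) := by
    rw [← Measure.map_neg_eq_self (volume : Measure ℝ)]
    have m : MeasurableEmbedding fun x : ℝ => -x := (Homeomorph.neg ℝ).measurableEmbedding
    rw [m.integrableOn_map_iff]
    simp_rw [Function.comp_def, abs_neg, neg_preimage, neg_Iic, neg_zero]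
    exact (integrableOn_Ici_iff_integrableOn_Ioi).mpr hf
  have : IntegrableOn (fun t : ℝ => Real.exp (-b * |t|)) (Iic 0 ∪ Ioi 0) :=
    int_Iic.union hf
  rwa [Iic_union_Ioi, integrableOn_univ] at this

lemma continuous_logistic : Continuous logistic := by
  unfold logistic
  exact continuous_const.div (by continuity) (fun t => by positivity)

lemma integrable_exp_mul_hderiv {c : ℝ} (hc : c < 1) :
    Integrable (fun t : ℝ => Real.exp (c * |t|) * (logistic t * (1 - logistic t))) := by
  refine (integrable_exp_neg_abs (b := 1 - c) (by linarith)).mono ?_ ?_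
  · exact ((Real.continuous_exp.comp (continuous_const.mul continuous_abs)).mul
      (continuous_logistic.mul (continuous_const.sub continuous_logistic))).aestronglyMeasurable
  · refine ae_of_all _ (fun t => ?_)
    have h1 := hderiv_nonneg t
    have h2 := hderiv_le t
    have h3 : (0:ℝ) ≤ Real.exp (c * |t|) := (Real.exp_pos _).le
    rw [Real.norm_eq_abs, Real.norm_eq_abs, abs_of_nonneg (by positivity),
      abs_of_nonneg (Real.exp_pos _).le]
    calc Real.exp (c * |t|) * (logistic t * (1 - logistic t))
        ≤ Real.exp (c * |t|) * Real.exp (-|t|) := by nlinarith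
      _ = Real.exp (-(1 - c) * |t|) := by rw [← Real.exp_add]; ring_nf


/-- The right-hand side bound: ∑_{l=1}^κ C(κ,l) L^l e^{-lσA/((1+ε)m)}
∫ e^{l|t|/((1+ε)m)} h'(t) dt. -/
noncomputable def rhsBound (A ε L : ℝ) (m κ : ℕ) (σ : ℝ) : ℝ :=
  ∑ l ∈ Finset.Icc 1 κ, (κ.choose l : ℝ) * L ^ l *
    Real.exp (-(l * σ * A) / ((1 + ε) * m)) *
    ∫ t : ℝ, Real.exp (l * |t| / ((1 + ε) * m)) * (logistic t * (1 - logistic t))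

theorem binomial_tail_bound (A ε L : ℝ) (hA : 0 < A) (hε : 0 < ε) (hL : 0 < L)
    (m κ : ℕ) (hκ : 1 ≤ κ) (hκm : κ ≤ m) (σ : ℝ) (hσ : 0 < σ)
    (g : ℝ → ℝ) (hg01 : ∀ t, 0 ≤ g t ∧ g t ≤ 1)
    (hglb : ∀ t ∈ Set.Ioo (-(A * σ)) (A * σ),
      0 ≤ (1 - L * Real.exp (-(σ * A) / ((1 + ε) * m) + |t| / ((1 + ε) * m))) ^ κ →
      (1 - L * Real.exp (-(σ * A) / ((1 + ε) * m) + |t| / ((1 + ε) * m))) ^ κ ≤ g t) :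
    |∫ t in Set.Ioo (-(A * σ)) (A * σ),
        logistic t * (1 - logistic t) * (1 - g t)| ≤ rhsBound A ε L m κ σ ∧
    ∃ C : ℝ, ∀ σ' : ℝ, 1 ≤ σ' →
      rhsBound A ε L m κ σ' ≤ C * Real.exp (-(σ' * A) / ((1 + ε) * m)) := by
  have hm1 : (1:ℝ) ≤ (m:ℝ) := by exact_mod_cast hκ.trans hκm
  have hd : (0:ℝ) < (1 + ε) * m := by nlinarith
  have hd1 : (1:ℝ) < (1 + ε) * m := by nlinarith
  have hIl_nonneg : ∀ l : ℕ, 0 ≤ ∫ t : ℝ,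
      Real.exp (l * |t| / ((1 + ε) * m)) * (logistic t * (1 - logistic t)) :=
    fun l => integral_nonneg fun t => mul_nonneg (Real.exp_pos _).le (hderiv_nonneg t)
  have hterm_nonneg : ∀ (s : ℝ) (l : ℕ), 0 ≤ (κ.choose l : ℝ) * L ^ l *
      Real.exp (-(l * s * A) / ((1 + ε) * m)) *
      ∫ t : ℝ, Real.exp (l * |t| / ((1 + ε) * m)) * (logistic t * (1 - logistic t)) :=
    fun s l => mul_nonneg (by positivity) (hIl_nonneg l)
  constructor
  · -- Part 1
    set S := Set.Ioo (-(A * σ)) (A * σ) with hS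
    set f := fun t : ℝ => logistic t * (1 - logistic t) * (1 - g t) with hf
    by_cases hfi : IntegrableOn f S volume
    · have hI1 : Integrable (fun t : ℝ =>
          Real.exp (|t| / ((1 + ε) * m)) * (logistic t * (1 - logistic t))) := by
        have h1d : (1:ℝ) / ((1 + ε) * m) < 1 := (div_lt_one hd).mpr hd1
        simpa [div_eq_mul_inv, mul_comm] using integrable_exp_mul_hderiv h1d
      set c1 : ℝ := (κ:ℝ) * L * Real.exp (-(σ * A) / ((1 + ε) * m)) with hc1
      have hB : Integrable (fun t : ℝ =>
          c1 * (Real.exp (|t| / ((1 + ε) * m)) * (logistic t * (1 - logistic t)))) :=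
        hI1.const_mul c1
      have hbd : ∀ t ∈ S, |f t| ≤
          c1 * (Real.exp (|t| / ((1 + ε) * m)) * (logistic t * (1 - logistic t))) := by
        intro t ht
        obtain ⟨hg0, hg1⟩ := hg01 t
        have hh := hderiv_nonneg t
        set x : ℝ := L * Real.exp (-(σ * A) / ((1 + ε) * m) + |t| / ((1 + ε) * m)) with hxd
        have hxpos : 0 < x := by positivity
        have hgx : 1 - g t ≤ (κ:ℝ) * x := by
          have hκr : (1:ℝ) ≤ (κ:ℝ) := by exact_mod_cast hκ
          by_cases hx1 : x ≤ 1
          · have hpow : 0 ≤ (1 - x) ^ κ := pow_nonneg (by linarith) κ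
            have hgl := hglb t ht hpow
            have hbern : 1 + (κ:ℝ) * (-x) ≤ (1 + (-x)) ^ κ :=
              one_add_mul_le_pow (by linarith) κ
            have : (1 + -x) ^ κ = (1 - x) ^ κ := by ring_nf
            rw [this] at hbern
            linarith
          · push_neg at hx1
            nlinarith
        have hfeq : |f t| = logistic t * (1 - logistic t) * (1 - g t) :=
          abs_of_nonneg (mul_nonneg hh (by linarith))
        rw [hfeq]
        have hkey : logistic t * (1 - logistic t) * ((κ:ℝ) * x) =
            c1 * (Real.exp (|t| / ((1 + ε) * m)) * (logistic t * (1 - logistic t))) := by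
          rw [hxd, hc1, Real.exp_add]; ring
        nlinarith [mul_le_mul_of_nonneg_left hgx hh]
      calc |∫ t in S, f t|
          ≤ ∫ t in S, |f t| := by
            rw [← Real.norm_eq_abs]
            exact (norm_integral_le_integral_norm _).trans_eq (by simp [Real.norm_eq_abs])
        _ ≤ ∫ t in S, c1 * (Real.exp (|t| / ((1 + ε) * m)) * (logistic t * (1 - logistic t))) := by
            refine integral_mono_of_nonneg (ae_of_all _ fun t => abs_nonneg _)
              hB.integrableOn ?_
            exact (ae_restrict_iff' measurableSet_Ioo).2 (ae_of_all _ hbd)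
        _ ≤ ∫ t : ℝ, c1 * (Real.exp (|t| / ((1 + ε) * m)) * (logistic t * (1 - logistic t))) := by
            refine setIntegral_le_integral hB (ae_of_all _ fun t => ?_)
            have := hderiv_nonneg t
            positivity
        _ = c1 * ∫ t : ℝ, Real.exp (|t| / ((1 + ε) * m)) * (logistic t * (1 - logistic t)) :=
            integral_const_mul _ _
        _ ≤ rhsBound A ε L m κ σ := by
            have h1mem : 1 ∈ Finset.Icc 1 κ := Finset.mem_Icc.mpr ⟨le_refl 1, hκ⟩
            have := Finset.single_le_sum (f := fun l : ℕ => (κ.choose l : ℝ) * L ^ l *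
              Real.exp (-(l * σ * A) / ((1 + ε) * m)) *
              ∫ t : ℝ, Real.exp (l * |t| / ((1 + ε) * m)) * (logistic t * (1 - logistic t)))
              (fun l _ => hterm_nonneg σ l) h1mem
            unfold rhsBound
            refine le_trans (le_of_eq ?_) this
            simp only [Nat.choose_one_right, pow_one, Nat.cast_one, one_mul, hc1]
    · rw [integral_undef hfi, abs_zero]
      exact Finset.sum_nonneg fun l _ => hterm_nonneg σ l
  · -- Part 2
    refine ⟨∑ l ∈ Finset.Icc 1 κ, (κ.choose l : ℝ) * L ^ l *
      ∫ t : ℝ, Real.exp (l * |t| / ((1 + ε) * m)) * (logistic t * (1 - logistic t)),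
      fun σ' hσ' => ?_⟩
    unfold rhsBound
    rw [Finset.sum_mul]
    refine Finset.sum_le_sum fun l hl => ?_
    have hl1 : (1:ℝ) ≤ (l:ℝ) := by exact_mod_cast (Finset.mem_Icc.mp hl).1
    have hexp : Real.exp (-((l:ℝ) * σ' * A) / ((1 + ε) * m)) ≤
        Real.exp (-(σ' * A) / ((1 + ε) * m)) := by
      apply Real.exp_le_exp.mpr
      apply div_le_div_of_nonneg_right ?_ hd.le
      nlinarith [mul_nonneg (mul_nonneg (sub_nonneg.mpr hl1) (by linarith : (0:ℝ) ≤ σ')) hA.le]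
    calc (κ.choose l : ℝ) * L ^ l * Real.exp (-((l:ℝ) * σ' * A) / ((1 + ε) * m)) *
          ∫ t : ℝ, Real.exp (l * |t| / ((1 + ε) * m)) * (logistic t * (1 - logistic t))
        = ((κ.choose l : ℝ) * L ^ l *
          ∫ t : ℝ, Real.exp (l * |t| / ((1 + ε) * m)) * (logistic t * (1 - logistic t))) *
          Real.exp (-((l:ℝ) * σ' * A) / ((1 + ε) * m)) := by ring
      _ ≤ _ := mul_le_mul_of_nonneg_left hexp
          (mul_nonneg (by positivity) (hIl_nonneg l))
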